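/- For the inductively defined set of terms over names with function symbols, simultaneous substitution satisfies the alpha-renaming law: if the names in the list b⃗ occur neither in X nor in a⃗, then X[a⃗ := T⃗] equals ((b⃗ a⃗) · X)[b⃗ := T⃗], where (b⃗ a⃗) denotes the permutation swapping each bᵢ with the corresponding aᵢ. -/

import Mathlib

/-- Terms over a signature `F` of function symbols: a term is either a name
(drawn from the countably infinite set ℕ) or a function symbol applied to a
list of terms. -/
inductive Term (F : Type) : Type
  | name : ℕ → Term F
  | app  : F → List (Term F) → Term F

namespace Term

-- The (finite) set of names occurring syntactically in a term / a list of terms.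
mutual
  def namesT {F : Type} : Term F → Finset ℕ
    | .name a => {a}
    | .app _ ts => namesL ts
  def namesL {F : Type} : List (Term F) → Finset ℕ
    | [] => ∅
    | t :: ts => namesT t ∪ namesL ts
end

-- Capture-free simultaneous substitution of the terms `Ts` for the names `as`.
mutual
  def substT {F : Type} (as : List ℕ) (Ts : List (Term F)) : Term F → Term F
    | .name a =>
        if a ∈ as then Ts.getD (as.idxOf a) (.name a) else .name a
    | .app f ts => .app f (substL as Ts ts)
  def substL {F : Type} (as : List ℕ) (Ts : List (Term F)) :
      List (Term F) → List (Term F)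
    | [] => []
    | t :: ts => substT as Ts t :: substL as Ts ts
end

-- Renaming of the names of a term by a function σ : ℕ → ℕ.
mutual
  def renameT {F : Type} (σ : ℕ → ℕ) : Term F → Term F
    | .name a => .name (σ a)
    | .app f ts => .app f (renameL σ ts)
  def renameL {F : Type} (σ : ℕ → ℕ) : List (Term F) → List (Term F)
    | [] => []
    | t :: ts => renameT σ t :: renameL σ ts
end

/-- The permutation `(bs as)`: the composition of the transpositions
`(bᵢ aᵢ)` for corresponding entries of the two lists. -/
def swapPerm (bs as : List ℕ) : Equiv.Perm ℕ :=
  ((bs.zip as).map fun p => Equiv.swap p.1 p.2).prod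

end Term

namespace TermAux
open Term

theorem swapPerm_cons (b a : ℕ) (bs as : List ℕ) :
    swapPerm (b::bs) (a::as) = Equiv.swap b a * swapPerm bs as := rfl

theorem swapPerm_fix (bs as : List ℕ) (x : ℕ) (hx : x ∉ as) (hx' : x ∉ bs) :
    swapPerm bs as x = x := by
  induction bs generalizing as with
  | nil => rfl
  | cons b bs ih =>
    cases as with
    | nil => rfl
    | cons a as =>
      simp only [swapPerm_cons, Equiv.Perm.mul_apply]
      rw [ih as (by simp_all) (by simp_all)]
      rw [Equiv.swap_apply_of_ne_of_ne (by simp_all) (by simp_all)]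

theorem swapPerm_getElem (bs as : List ℕ)
    (hnodup : as.Nodup) (hnodup' : bs.Nodup) (hlen : bs.length = as.length)
    (hdisj : ∀ b ∈ bs, b ∉ as) (i : ℕ) (hi : i < as.length) :
    swapPerm bs as as[i] = bs[i]'(hlen ▸ hi) := by
  induction bs generalizing as i with
  | nil => simp at hlen; omega
  | cons b bs ih =>
    cases as with
    | nil => simp at hi
    | cons a as =>
      simp only [swapPerm_cons, Equiv.Perm.mul_apply]
      cases i with
      | zero =>
        simp only [List.getElem_cons_zero]
        rw [swapPerm_fix bs as a (by simp_all)
          (fun h => hdisj a (by simp [h]) (by simp))]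
        simp
      | succ i =>
        simp only [List.getElem_cons_succ]
        rw [ih as hnodup.of_cons (List.Nodup.of_cons hnodup') (by simpa using hlen)
          (fun x hx => by have := hdisj x (by simp [hx]); simp_all)
          i (by simpa using hi)]
        have hib : i < bs.length := by simp at hlen hi; omega
        have h1 : bs[i] ≠ b := by
          intro h; exact (List.nodup_cons.1 hnodup').1 (h ▸ List.getElem_mem hib)
        have h2 : bs[i] ≠ a := by
          intro h
          exact hdisj bs[i] (by simp [List.getElem_mem hib]) (by simp [h])
        exact Equiv.swap_apply_of_ne_of_ne h1 h2

variable {F : Type}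

theorem name_case (as bs : List ℕ) (Ts : List (Term F))
    (hnodup : as.Nodup) (hnodup' : bs.Nodup)
    (hlen : bs.length = as.length) (hlenT : Ts.length = as.length)
    (hdisj : ∀ b ∈ bs, b ∉ as) (a : ℕ) (ha : a ∉ bs) :
    substT as Ts (.name a) = substT bs Ts (.name (swapPerm bs as a)) := by
  by_cases hmem : a ∈ as
  · have hi : as.idxOf a < as.length := List.idxOf_lt_length_iff.2 hmem
    have hget : as[as.idxOf a] = a := List.getElem_idxOf hi
    have hswap : swapPerm bs as a = bs[as.idxOf a]'(hlen ▸ hi) := by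
      conv_lhs => rw [← hget]
      exact swapPerm_getElem bs as hnodup hnodup' hlen hdisj _ hi
    have hbm : bs[as.idxOf a]'(hlen ▸ hi) ∈ bs := List.getElem_mem _
    have hidx : bs.idxOf (bs[as.idxOf a]'(hlen ▸ hi)) = as.idxOf a :=
      List.Nodup.idxOf_getElem hnodup' _ _
    simp only [substT, hmem, if_pos, hswap, hbm, if_true, hidx]
    rw [List.getD_eq_getElem _ _ (by omega), List.getD_eq_getElem _ _ (by omega)]
  · rw [swapPerm_fix bs as a hmem ha]
    simp only [substT, hmem, ha, if_false]

mutual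
theorem mainT (as bs : List ℕ) (Ts : List (Term F))
    (hnodup : as.Nodup) (hnodup' : bs.Nodup)
    (hlen : bs.length = as.length) (hlenT : Ts.length = as.length)
    (hdisj : ∀ b ∈ bs, b ∉ as) :
    ∀ X : Term F, (∀ b ∈ bs, b ∉ namesT X) →
      substT as Ts X = substT bs Ts (renameT (fun a => swapPerm bs as a) X)
  | .name a, hf => by
      have ha : a ∉ bs := fun h => hf a h (by simp [namesT])
      exact name_case as bs Ts hnodup hnodup' hlen hlenT hdisj a ha
  | .app f ts, hf => by
      simp only [substT, renameT, app.injEq, true_and]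
      exact mainL as bs Ts hnodup hnodup' hlen hlenT hdisj ts
        (fun b hb => by have := hf b hb; simpa [namesT] using this)

theorem mainL (as bs : List ℕ) (Ts : List (Term F))
    (hnodup : as.Nodup) (hnodup' : bs.Nodup)
    (hlen : bs.length = as.length) (hlenT : Ts.length = as.length)
    (hdisj : ∀ b ∈ bs, b ∉ as) :
    ∀ ts : List (Term F), (∀ b ∈ bs, b ∉ namesL ts) →
      substL as Ts ts = substL bs Ts (renameL (fun a => swapPerm bs as a) ts)
  | [], _ => rfl
  | t :: ts, hf => by
      simp only [substL, renameL, List.cons.injEq]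
      constructor
      · exact mainT as bs Ts hnodup hnodup' hlen hlenT hdisj t
          (fun b hb => by have := hf b hb; simp [namesL] at this; exact this.1)
      · exact mainL as bs Ts hnodup hnodup' hlen hlenT hdisj ts
          (fun b hb => by have := hf b hb; simp [namesL] at this; exact this.2)
end

end TermAux

open Term in
/-- alpha-renaming law for substitution.  If the names `bs`
occur neither in `X` nor in `as`, then
`X[as := Ts] = ((bs as) · X)[bs := Ts]`. -/
theorem subst_alpha {F : Type} (X : Term F) (as bs : List ℕ)
    (Ts : List (Term F))
    (hnodup : as.Nodup) (hnodup' : bs.Nodup)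
    (hlen : bs.length = as.length) (hlenT : Ts.length = as.length)
    (hfresh : ∀ b ∈ bs, b ∉ namesT X)
    (hdisj : ∀ b ∈ bs, b ∉ as) :
    substT as Ts X = substT bs Ts (renameT (fun a => swapPerm bs as a) X) := by
  exact TermAux.mainT as bs Ts hnodup hnodup' hlen hlenT hdisj X hfresh
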